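/- Let Ω ⊆ ℝᵈ be a Lebesgue-measurable set with 0 < |Ω| < ∞, let b : Ω → ℝ be a bounded measurable function with b ≥ 0 a.e., and let ε₁ > 0 and ε₃ > 0. Then there exists a unique constant χ ∈ ℝ for which there exists a measurable function r : Ω → (0, ∞) with log r(x) + ε₁ r(x) + ε₃ b(x) = χ for a.e. x ∈ Ω and ∫_Ω r(x) dx = 1; moreover this r is uniquely determined up to a.e. equality and is essentially bounded. -/

import Mathlib

open MeasureTheory

section EquilibriumHelpers
open Set

noncomputable section

def phiFun (ε₁ s : ℝ) : ℝ := Real.log s + ε₁ * s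

lemma phi_strictMonoOn {ε₁ : ℝ} (hε₁ : 0 < ε₁) : StrictMonoOn (phiFun ε₁) (Ioi 0) := by
  intro a ha b hb hab
  have := Real.log_lt_log ha hab
  have : Real.log a + ε₁ * a < Real.log b + ε₁ * b := by nlinarith
  simpa [phiFun] using this

lemma phi_continuousOn {ε₁ : ℝ} : ContinuousOn (phiFun ε₁) (Ioi 0) := by
  apply ContinuousOn.add
  · exact Real.continuousOn_log.mono (fun x hx => ne_of_gt hx)
  · exact (continuous_const.mul continuous_id).continuousOn

lemma phi_surj {ε₁ : ℝ} (hε₁ : 0 < ε₁) (y : ℝ) : ∃ s ∈ Ioi (0:ℝ), phiFun ε₁ s = y := by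
  set a : ℝ := min 1 (Real.exp (y - ε₁)) with ha_def
  set c : ℝ := max 1 (y / ε₁) with hc_def
  have ha0 : 0 < a := lt_min one_pos (Real.exp_pos _)
  have hac : a ≤ c := le_trans (min_le_left _ _) (le_max_left _ _)
  have hfa : phiFun ε₁ a ≤ y := by
    have h1 : Real.log a ≤ y - ε₁ := by
      calc Real.log a ≤ Real.log (Real.exp (y - ε₁)) :=
        Real.log_le_log ha0 (min_le_right _ _)
      _ = y - ε₁ := Real.log_exp _
    have h2 : ε₁ * a ≤ ε₁ := by nlinarith [min_le_left (1:ℝ) (Real.exp (y - ε₁))]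
    simp only [phiFun]; linarith
  have hfc : y ≤ phiFun ε₁ c := by
    have h1 : (0:ℝ) ≤ Real.log c := Real.log_nonneg (le_max_left _ _)
    have h2 : y ≤ ε₁ * c := by
      have := le_max_right 1 (y / ε₁)
      calc y = ε₁ * (y / ε₁) := by field_simp
      _ ≤ ε₁ * c := by nlinarith
    simp only [phiFun]; linarith
  have hsub : Icc a c ⊆ Ioi 0 := fun x hx => lt_of_lt_of_le ha0 hx.1
  have := intermediate_value_Icc (f := phiFun ε₁) hac (phi_continuousOn.mono hsub)
  obtain ⟨s, hs, hsy⟩ := this ⟨hfa, hfc⟩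
  exact ⟨s, hsub hs, hsy⟩

def gIso {ε₁ : ℝ} (hε₁ : 0 < ε₁) : Ioi (0:ℝ) ≃o ℝ :=
  StrictMono.orderIsoOfSurjective (fun s => phiFun ε₁ s)
    (fun a b hab => phi_strictMonoOn hε₁ a.2 b.2 hab)
    (fun y => by obtain ⟨s, hs, h⟩ := phi_surj hε₁ y; exact ⟨⟨s, hs⟩, h⟩)

def gFun {ε₁ : ℝ} (hε₁ : 0 < ε₁) (y : ℝ) : ℝ := ((gIso hε₁).symm y : ℝ)

lemma gFun_pos {ε₁ : ℝ} (hε₁ : 0 < ε₁) (y : ℝ) : 0 < gFun hε₁ y := ((gIso hε₁).symm y).2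

lemma phi_gFun {ε₁ : ℝ} (hε₁ : 0 < ε₁) (y : ℝ) : phiFun ε₁ (gFun hε₁ y) = y := by
  have h := (gIso hε₁).apply_symm_apply y
  have hc := StrictMono.coe_orderIsoOfSurjective (fun s : Ioi (0:ℝ) => phiFun ε₁ s)
    (fun a b hab => phi_strictMonoOn hε₁ a.2 b.2 hab)
    (fun y => by obtain ⟨s, hs, h⟩ := phi_surj hε₁ y; exact ⟨⟨s, hs⟩, h⟩)
  calc phiFun ε₁ (gFun hε₁ y) = (gIso hε₁) ((gIso hε₁).symm y) := (congrFun hc _).symm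
  _ = y := h

lemma gFun_eq_of {ε₁ : ℝ} (hε₁ : 0 < ε₁) {s y : ℝ} (hs : 0 < s) (h : phiFun ε₁ s = y) :
    gFun hε₁ y = s :=
  ((phi_strictMonoOn hε₁).injOn (gFun_pos hε₁ y) hs (by rw [phi_gFun hε₁, h]))

lemma gFun_strictMono {ε₁ : ℝ} (hε₁ : 0 < ε₁) : StrictMono (gFun hε₁) :=
  fun a b hab => (gIso hε₁).symm.strictMono hab

lemma gFun_continuous {ε₁ : ℝ} (hε₁ : 0 < ε₁) : Continuous (gFun hε₁) :=
  continuous_subtype_val.comp (gIso hε₁).symm.continuous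

lemma gFun_le_exp {ε₁ : ℝ} (hε₁ : 0 < ε₁) (y : ℝ) : gFun hε₁ y ≤ Real.exp y := by
  have h := phi_gFun hε₁ y
  have hpos := gFun_pos hε₁ y
  have hlog : Real.log (gFun hε₁ y) ≤ y := by simp only [phiFun] at h; nlinarith
  calc gFun hε₁ y = Real.exp (Real.log (gFun hε₁ y)) := (Real.exp_log hpos).symm
  _ ≤ Real.exp y := Real.exp_le_exp.mpr hlog


end
end EquilibriumHelpers

/-- Existence and uniqueness of the bounded equilibrium of the first entropy–mobility
pair: there is a unique constant χ for which the entropy variable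
u₁ = log r + ε₁ r + ε₃ b equals χ a.e. for some positive normalized density r; moreover
this r is a.e. unique and essentially bounded (Sections 2.1 and 4.1.2 of the paper). -/
theorem equilibrium_pair1_exists_unique
    (d : ℕ) (Ω : Set (EuclideanSpace ℝ (Fin d))) (hΩ : MeasurableSet Ω)
    (hΩpos : 0 < volume Ω) (hΩfin : volume Ω < ⊤)
    (b : EuclideanSpace ℝ (Fin d) → ℝ) (hbmeas : Measurable b)
    (B : ℝ) (hbB : ∀ x, |b x| ≤ B)
    (hb0 : ∀ᵐ x ∂(volume.restrict Ω), 0 ≤ b x)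
    (ε₁ ε₃ : ℝ) (hε₁ : 0 < ε₁) (hε₃ : 0 < ε₃) :
    (∃! χ : ℝ, ∃ r : EuclideanSpace ℝ (Fin d) → ℝ, Measurable r ∧
        (∀ᵐ x ∂(volume.restrict Ω), 0 < r x) ∧
        (∀ᵐ x ∂(volume.restrict Ω), Real.log (r x) + ε₁ * r x + ε₃ * b x = χ) ∧
        ∫ x, r x ∂(volume.restrict Ω) = 1) ∧
    (∀ χ₁ χ₂ : ℝ, ∀ r₁ r₂ : EuclideanSpace ℝ (Fin d) → ℝ,
      (Measurable r₁ ∧ (∀ᵐ x ∂(volume.restrict Ω), 0 < r₁ x) ∧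
        (∀ᵐ x ∂(volume.restrict Ω), Real.log (r₁ x) + ε₁ * r₁ x + ε₃ * b x = χ₁) ∧
        ∫ x, r₁ x ∂(volume.restrict Ω) = 1) →
      (Measurable r₂ ∧ (∀ᵐ x ∂(volume.restrict Ω), 0 < r₂ x) ∧
        (∀ᵐ x ∂(volume.restrict Ω), Real.log (r₂ x) + ε₁ * r₂ x + ε₃ * b x = χ₂) ∧
        ∫ x, r₂ x ∂(volume.restrict Ω) = 1) →
      r₁ =ᵐ[volume.restrict Ω] r₂) ∧
    (∀ χ : ℝ, ∀ r : EuclideanSpace ℝ (Fin d) → ℝ,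
      (Measurable r ∧ (∀ᵐ x ∂(volume.restrict Ω), 0 < r x) ∧
        (∀ᵐ x ∂(volume.restrict Ω), Real.log (r x) + ε₁ * r x + ε₃ * b x = χ) ∧
        ∫ x, r x ∂(volume.restrict Ω) = 1) →
      ∃ M : ℝ, ∀ᵐ x ∂(volume.restrict Ω), |r x| ≤ M) := by
  classical
  set μ := volume.restrict Ω with hμdef
  haveI : IsFiniteMeasure μ := ⟨by simpa [hμdef, Measure.restrict_apply_univ] using hΩfin⟩
  set V : ℝ := (volume Ω).toReal with hVdef
  have hV : 0 < V := ENNReal.toReal_pos hΩpos.ne' hΩfin.ne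
  have hμuniv : μ Set.univ = volume Ω := by simp [hμdef, Measure.restrict_apply_univ]
  -- the canonical solution for given χ
  set G : ℝ → EuclideanSpace ℝ (Fin d) → ℝ := fun χ x => gFun hε₁ (χ - ε₃ * b x) with hGdef
  have hGmeas : ∀ χ, Measurable (G χ) := fun χ =>
    (gFun_continuous hε₁).measurable.comp (measurable_const.sub (hbmeas.const_mul ε₃))
  have hGpos : ∀ χ x, 0 < G χ x := fun χ x => gFun_pos hε₁ _
  have hGle : ∀ χ x, G χ x ≤ gFun hε₁ (χ + ε₃ * B) := by
    intro χ x
    apply (gFun_strictMono hε₁).monotone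
    have h1 : -B ≤ b x := (abs_le.1 (hbB x)).1
    nlinarith
  have hGint : ∀ χ, Integrable (G χ) μ := by
    intro χ
    refine Integrable.mono (integrable_const (gFun hε₁ (χ + ε₃ * B))) ((hGmeas χ).aestronglyMeasurable) ?_
    filter_upwards with x
    rw [Real.norm_eq_abs, Real.norm_eq_abs, abs_of_pos (hGpos χ x),
      abs_of_pos (gFun_pos hε₁ _)]
    exact hGle χ x
  set F : ℝ → ℝ := fun χ => ∫ x, G χ x ∂μ with hFdef
  -- F is strictly monotone
  have hFmono : StrictMono F := by
    intro χ₁ χ₂ h12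
    have hsub : ∀ x, 0 < G χ₂ x - G χ₁ x := by
      intro x
      have : G χ₁ x < G χ₂ x := gFun_strictMono hε₁ (by nlinarith)
      linarith
    have hpos : 0 < ∫ x, (G χ₂ x - G χ₁ x) ∂μ := by
      rw [integral_pos_iff_support_of_nonneg_ae
        (Filter.Eventually.of_forall fun x => (hsub x).le) ((hGint χ₂).sub (hGint χ₁))]
      have : Function.support (fun x => G χ₂ x - G χ₁ x) = Set.univ := by
        ext x; simp [Function.support, (hsub x).ne']
      rw [this, hμuniv]; exact hΩpos
    have := integral_sub (hGint χ₂) (hGint χ₁)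
    simp only [hFdef]
    linarith [hpos, this ▸ hpos]
  -- F is continuous
  have hFcont : Continuous F := by
    rw [continuous_iff_continuousAt]
    intro χ₀
    have key : Filter.Tendsto (fun χ => ∫ x, G χ x ∂μ) (nhds χ₀) (nhds (∫ x, G χ₀ x ∂μ)) := by
      apply tendsto_integral_filter_of_dominated_convergence
        (fun _ => gFun hε₁ (χ₀ + 1 + ε₃ * B))
      · exact Filter.Eventually.of_forall fun χ => (hGmeas χ).aestronglyMeasurable
      · have hmem : Set.Icc (χ₀ - 1) (χ₀ + 1) ∈ nhds χ₀ :=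
          Icc_mem_nhds (by linarith) (by linarith)
        filter_upwards [hmem] with χ hχ
        filter_upwards with x
        rw [Real.norm_eq_abs, abs_of_pos (hGpos χ x)]
        apply (gFun_strictMono hε₁).monotone
        have h1 : -B ≤ b x := (abs_le.1 (hbB x)).1
        have := hχ.2
        nlinarith
      · exact integrable_const _
      · refine Filter.Eventually.of_forall fun x => ?_
        exact ((gFun_continuous hε₁).comp (continuous_id.sub continuous_const)).continuousAt
    exact key
  -- characterization of solutions
  have hchar : ∀ χ : ℝ, ∀ r : EuclideanSpace ℝ (Fin d) → ℝ,
      (∀ᵐ x ∂μ, 0 < r x) →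
      (∀ᵐ x ∂μ, Real.log (r x) + ε₁ * r x + ε₃ * b x = χ) →
      r =ᵐ[μ] G χ := by
    intro χ r hrpos hreq
    filter_upwards [hrpos, hreq] with x hx heq
    have : phiFun ε₁ (r x) = χ - ε₃ * b x := by simp only [phiFun]; linarith
    exact (gFun_eq_of hε₁ hx this).symm
  have hFval : ∀ χ : ℝ, ∀ r : EuclideanSpace ℝ (Fin d) → ℝ,
      (∀ᵐ x ∂μ, 0 < r x) →
      (∀ᵐ x ∂μ, Real.log (r x) + ε₁ * r x + ε₃ * b x = χ) →
      (∫ x, r x ∂μ = 1) → F χ = 1 := by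
    intro χ r h1 h2 h3
    show ∫ x, G χ x ∂μ = 1
    rw [← integral_congr_ae (hchar χ r h1 h2)]
    exact h3
  -- existence of χ with F χ = 1
  have hlow : ∃ χ₁ : ℝ, F χ₁ ≤ 1 := by
    refine ⟨Real.log (1 / (2 * V)), ?_⟩
    have hexp : Real.exp (Real.log (1 / (2 * V))) = 1 / (2 * V) :=
      Real.exp_log (by positivity)
    have hle : F (Real.log (1 / (2 * V))) ≤ ∫ _x, (1 / (2 * V) : ℝ) ∂μ := by
      apply integral_mono_ae (hGint _) (integrable_const _)
      filter_upwards [hb0] with x hbx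
      calc G _ x ≤ Real.exp (Real.log (1 / (2 * V)) - ε₃ * b x) := gFun_le_exp hε₁ _
      _ ≤ Real.exp (Real.log (1 / (2 * V))) := Real.exp_le_exp.mpr (by nlinarith)
      _ = 1 / (2 * V) := hexp
    rw [integral_const, measureReal_def, hμuniv, ← hVdef, smul_eq_mul] at hle
    calc F _ ≤ V * (1 / (2 * V)) := hle
    _ = 1 / 2 := by field_simp
    _ ≤ 1 := by norm_num
  have hhigh : ∃ χ₂ : ℝ, 1 ≤ F χ₂ := by
    refine ⟨phiFun ε₁ (2 / V) + ε₃ * B, ?_⟩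
    have hT : (0:ℝ) < 2 / V := by positivity
    have hge : ∫ _x, (2 / V : ℝ) ∂μ ≤ F (phiFun ε₁ (2 / V) + ε₃ * B) := by
      apply integral_mono_ae (integrable_const _) (hGint _)
      filter_upwards with x
      have h1 : b x ≤ B := (abs_le.1 (hbB x)).2
      have : phiFun ε₁ (2 / V) ≤ phiFun ε₁ (2 / V) + ε₃ * B - ε₃ * b x := by nlinarith
      calc (2 / V : ℝ) = gFun hε₁ (phiFun ε₁ (2 / V)) := (gFun_eq_of hε₁ hT rfl).symm
      _ ≤ G _ x := (gFun_strictMono hε₁).monotone this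
    rw [integral_const, measureReal_def, hμuniv, ← hVdef, smul_eq_mul] at hge
    calc (1:ℝ) ≤ V * (2 / V) := by rw [mul_div_cancel₀]; norm_num; exact hV.ne'
    _ ≤ F _ := hge
  obtain ⟨χ₁, hχ₁⟩ := hlow
  obtain ⟨χ₂, hχ₂⟩ := hhigh
  have h12 : χ₁ ≤ χ₂ := by
    by_contra h
    push_neg at h
    have := hFmono h
    linarith
  obtain ⟨χ, _, hχeq⟩ := intermediate_value_Icc h12 hFcont.continuousOn ⟨hχ₁, hχ₂⟩
  -- assemble
  refine ⟨⟨χ, ⟨G χ, hGmeas χ, Filter.Eventually.of_forall (hGpos χ), ?_, hχeq⟩, ?_⟩, ?_, ?_⟩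
  · filter_upwards with x
    have := phi_gFun hε₁ (χ - ε₃ * b x)
    simp only [phiFun] at this
    simp only [hGdef]
    linarith
  · rintro χ' ⟨r', hm', hp', he', hi'⟩
    exact hFmono.injective (by rw [hFval χ' r' hp' he' hi', hχeq])
  · rintro χ₁' χ₂' r₁ r₂ ⟨hm1, hp1, he1, hi1⟩ ⟨hm2, hp2, he2, hi2⟩
    have : χ₁' = χ₂' :=
      hFmono.injective (by rw [hFval χ₁' r₁ hp1 he1 hi1, hFval χ₂' r₂ hp2 he2 hi2])
    subst this
    exact (hchar _ r₁ hp1 he1).trans (hchar _ r₂ hp2 he2).symm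
  · rintro χ' r ⟨hm, hp, he, hi⟩
    refine ⟨gFun hε₁ (χ' + ε₃ * B), ?_⟩
    filter_upwards [hchar χ' r hp he, hp] with x hx hxp
    rw [abs_of_pos hxp, hx]
    exact hGle χ' x
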